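/- For every path i and every real β, the difference between a quitter's expected cost and a subscriber's cost decomposes as in equation (18) of the paper: (Σ_{h=1}^{n} ρ_h·T_h)·β − (T_i·β + P_i) = Σ_{h=1}^{i−1} ρ_h·[(T_h − T_i)·β − Σ_{g=h+1}^{i} (T_{g−1} − T_g)·β_{g−1}] + Σ_{h=i+1}^{n} ρ_h·[(T_h − T_i)·β + Σ_{g=i+1}^{h} (T_{g−1} − T_g)·β_{g−1}]. -/

import Mathlib

open Finset

lemma icc_split (i n : ℕ) (hi1 : 1 ≤ i) (hin : i ≤ n) (f : ℕ → ℝ) :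
    ∑ h ∈ Icc 1 n, f h = (∑ h ∈ Icc 1 (i-1), f h) + f i + ∑ h ∈ Icc (i+1) n, f h := by
  have e1 : Icc 1 n = Ioc 0 n := by rw [← Finset.Icc_add_one_left_eq_Ioc]; rfl
  have e2 : Icc 1 (i-1) = Ioc 0 (i-1) := by rw [← Finset.Icc_add_one_left_eq_Ioc]; rfl
  have e3 : Icc (i+1) n = Ioc i n := by rw [← Finset.Icc_add_one_left_eq_Ioc]
  rw [e1, e2, e3, ← Finset.sum_Ioc_consecutive f (Nat.zero_le (i-1)) (by omega : i - 1 ≤ n),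
    ← Finset.sum_Ioc_consecutive f (by omega : i - 1 ≤ i) hin]
  have : Ioc (i-1) i = {i} := by
    ext x; simp only [Finset.mem_Ioc, Finset.mem_singleton]; omega
  rw [this, Finset.sum_singleton, add_assoc]
theorem ubcs_cost_difference_decomposition
    (n : ℕ) (hn : 1 ≤ n)
    (T β ρ P : ℕ → ℝ)
    (hT : ∀ i j, 1 ≤ i → i ≤ j → j ≤ n → T j ≤ T i)
    (hβ0 : 0 ≤ β 0)
    (hβ : ∀ i j, i ≤ j → j ≤ n → β i ≤ β j)
    (hρ : ∀ i, 1 ≤ i → i ≤ n → 0 ≤ ρ i)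
    (hρ1 : ∑ h ∈ Icc 1 n, ρ h = 1)
    (hP : ∀ i, 1 ≤ i → i ≤ n →
      P i = ∑ h ∈ Icc 1 (i - 1), ρ h * ∑ g ∈ Icc (h + 1) i, (T (g - 1) - T g) * β (g - 1)
          - ∑ h ∈ Icc (i + 1) n, ρ h * ∑ g ∈ Icc (i + 1) h, (T (g - 1) - T g) * β (g - 1)) :
    ∀ i, 1 ≤ i → i ≤ n → ∀ b : ℝ,
      (∑ h ∈ Icc 1 n, ρ h * T h) * b - (T i * b + P i) =
        ∑ h ∈ Icc 1 (i - 1), ρ h *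
          ((T h - T i) * b - ∑ g ∈ Icc (h + 1) i, (T (g - 1) - T g) * β (g - 1))
      + ∑ h ∈ Icc (i + 1) n, ρ h *
          ((T h - T i) * b + ∑ g ∈ Icc (i + 1) h, (T (g - 1) - T g) * β (g - 1)) := by
  intro i hi1 hin b
  rw [hP i hi1 hin]
  rw [icc_split i n hi1 hin ρ] at hρ1
  rw [icc_split i n hi1 hin (fun h => ρ h * T h)]
  have e1 : ∀ (m k : ℕ) (S : ℕ → ℝ) (s : ℝ), ∑ h ∈ Icc m k, ρ h * ((T h - T i) * b + s * S h)
      = (∑ h ∈ Icc m k, ρ h * T h) * b - (∑ h ∈ Icc m k, ρ h) * (T i * b)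
        + s * ∑ h ∈ Icc m k, ρ h * S h := by
    intro m k S s
    rw [Finset.sum_mul, Finset.sum_mul, Finset.mul_sum, ← Finset.sum_sub_distrib,
      ← Finset.sum_add_distrib]
    exact Finset.sum_congr rfl (fun h _ => by ring)
  have g1 := e1 1 (i-1) (fun h => ∑ g ∈ Icc (h + 1) i, (T (g - 1) - T g) * β (g - 1)) (-1)
  have g2 := e1 (i+1) n (fun h => ∑ g ∈ Icc (i + 1) h, (T (g - 1) - T g) * β (g - 1)) 1
  simp only [neg_one_mul, neg_mul, one_mul, ← sub_eq_add_neg] at g1 g2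
  rw [g1, g2]
  linear_combination (T i * b) * hρ1
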